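/- Let S be a maximum obtuse almost-equiangular subset of S^{n-1} with Gram matrix U, and let O = (1+1/n)^{-1}(U + (1/n)J - (1+1/n)I), where J is the all-ones matrix and I the identity. Then O is symmetric, O² = I, O·e = e for the all-ones vector e, O_{ii} = 0 for all i, and O_{ij}O_{jk}O_{ki} = 0 for all i, j, k. -/

import Mathlib

open scoped RealInnerProductSpace
open Matrix

section AuxSpectral
variable {m : Type*} [Fintype m] [DecidableEq m] {P : Matrix m m ℝ} (hP : P.IsHermitian)

lemma aux_spectral : P = (hP.eigenvectorUnitary : Matrix m m ℝ) *
    Matrix.diagonal hP.eigenvalues * star (hP.eigenvectorUnitary : Matrix m m ℝ) := by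
  have := hP.spectral_theorem
  rwa [RCLike.ofReal_real_eq_id, Function.id_comp] at this

lemma aux_trace : P.trace = ∑ i, hP.eigenvalues i := by
  conv_lhs => rw [aux_spectral hP]
  rw [Matrix.trace_mul_cycle, Matrix.UnitaryGroup.star_mul_self, one_mul, Matrix.trace_diagonal]

lemma aux_sq : (P * P) = (hP.eigenvectorUnitary : Matrix m m ℝ) *
    Matrix.diagonal (fun i => hP.eigenvalues i ^ 2) * star (hP.eigenvectorUnitary : Matrix m m ℝ) := by
  conv_lhs => rw [aux_spectral hP]
  have h1 : (star (hP.eigenvectorUnitary : Matrix m m ℝ)) * (hP.eigenvectorUnitary : Matrix m m ℝ) = 1 :=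
    Matrix.UnitaryGroup.star_mul_self _
  calc (hP.eigenvectorUnitary : Matrix m m ℝ) * Matrix.diagonal hP.eigenvalues *
        star (hP.eigenvectorUnitary : Matrix m m ℝ) *
        ((hP.eigenvectorUnitary : Matrix m m ℝ) * Matrix.diagonal hP.eigenvalues *
        star (hP.eigenvectorUnitary : Matrix m m ℝ))
      = (hP.eigenvectorUnitary : Matrix m m ℝ) * (Matrix.diagonal hP.eigenvalues *
          ((star (hP.eigenvectorUnitary : Matrix m m ℝ) * (hP.eigenvectorUnitary : Matrix m m ℝ)) *
          Matrix.diagonal hP.eigenvalues)) * star (hP.eigenvectorUnitary : Matrix m m ℝ) := by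
        simp only [Matrix.mul_assoc]
    _ = (hP.eigenvectorUnitary : Matrix m m ℝ) * Matrix.diagonal (fun i => hP.eigenvalues i ^ 2) *
          star (hP.eigenvectorUnitary : Matrix m m ℝ) := by
        rw [h1, one_mul, Matrix.diagonal_mul_diagonal]
        simp [Matrix.mul_assoc, pow_two]

lemma aux_trace_sq : (P * P).trace = ∑ i, hP.eigenvalues i ^ 2 := by
  rw [aux_sq hP, Matrix.trace_mul_cycle, Matrix.UnitaryGroup.star_mul_self, one_mul,
    Matrix.trace_diagonal]

lemma aux_two_smul (h2 : ∀ i, hP.eigenvalues i ^ 2 = 2 * hP.eigenvalues i) :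
    P * P = 2 • P := by
  rw [aux_sq hP]
  conv_rhs => rw [aux_spectral hP]
  rw [show (Matrix.diagonal fun i => hP.eigenvalues i ^ 2) =
      Matrix.diagonal (fun i => 2 * hP.eigenvalues i) from by simp [h2]]
  have : (Matrix.diagonal fun i => 2 * hP.eigenvalues i) = 2 • Matrix.diagonal hP.eigenvalues := by
    ext i j; by_cases h : i = j <;> simp [Matrix.diagonal, h]
  rw [this]
  simp only [Matrix.smul_mul, Matrix.mul_smul]

end AuxSpectral

theorem max_obtuse_almost_equiangular_orthogonal_matrix (n : ℕ)
    (x : Fin (2 * (n + 1)) → EuclideanSpace ℝ (Fin n))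
    (hinj : Function.Injective x)
    (hunit : ∀ i, ‖x i‖ = 1)
    (halmost : ∀ i j k : Fin (2 * (n + 1)), i ≠ j → i ≠ k → j ≠ k →
      ⟪x i, x j⟫ = -1 / n ∨ ⟪x i, x k⟫ = -1 / n ∨ ⟪x j, x k⟫ = -1 / n)
    (U O J : Matrix (Fin (2 * (n + 1))) (Fin (2 * (n + 1))) ℝ)
    (hU : ∀ i j, U i j = ⟪x i, x j⟫)
    (hJ : ∀ i j, J i j = 1)
    (hO : O = (1 + 1 / (n : ℝ))⁻¹ • (U + (1 / (n : ℝ)) • J - (1 + 1 / (n : ℝ)) • 1)) :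
    O.IsSymm ∧ O * O = 1 ∧ O.mulVec (fun _ => 1) = (fun _ => 1) ∧
      (∀ i, O i i = 0) ∧ ∀ i j k, O i j * O j k * O k i = 0 := by
  classical
  -- n ≥ 1
  have hn : 1 ≤ n := by
    by_contra h
    have hn0 : n = 0 := by omega
    subst hn0
    have h1 := hunit ⟨0, by norm_num⟩
    rw [EuclideanSpace.norm_eq] at h1
    simp at h1
  have hnR : (1 : ℝ) ≤ (n : ℝ) := by exact_mod_cast hn
  have hnpos : (0 : ℝ) < (n : ℝ) := by linarith
  set c : ℝ := 1 + 1 / (n : ℝ) with hc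
  have hcpos : 0 < c := by positivity
  have hcne : c ≠ 0 := ne_of_gt hcpos
  have hinv : c⁻¹ * c = 1 := inv_mul_cancel₀ hcne
  -- entry formula
  have hOent : ∀ i j, O i j = c⁻¹ * (U i j + 1 / n - if i = j then c else 0) := by
    intro i j
    rw [hO]
    simp [Matrix.smul_apply, Matrix.add_apply, Matrix.sub_apply, Matrix.one_apply, hJ,
      mul_ite, mul_one, mul_zero, smul_eq_mul]
  have hUii : ∀ i, U i i = 1 := by
    intro i
    rw [hU, real_inner_self_eq_norm_sq, hunit]; norm_num
  have hOdiag : ∀ i, O i i = 0 := by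
    intro i
    rw [hOent, hUii, if_pos rfl]
    simp [hc]
  have hUsymm : ∀ i j, U i j = U j i := by
    intro i j; rw [hU, hU, real_inner_comm]
  have hOsymm' : ∀ i j, O i j = O j i := by
    intro i j
    rw [hOent, hOent, hUsymm i j]
    congr 1
    congr 1
    simp [eq_comm]
  have hOsym : O.IsSymm := by
    ext i j; rw [Matrix.transpose_apply, hOsymm']
  -- triangle products vanish
  have hzero : ∀ i j, i ≠ j → U i j = -1 / n → O i j = 0 := by
    intro i j hij hUij
    rw [hOent, if_neg hij, hUij]
    field_simp
    ring
  have htri : ∀ i j k, O i j * O j k * O k i = 0 := by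
    intro i j k
    rcases eq_or_ne i j with rfl | hij
    · rw [hOdiag]; ring
    rcases eq_or_ne j k with rfl | hjk
    · rw [hOdiag]; ring
    rcases eq_or_ne i k with rfl | hik
    · rw [hOdiag]; ring
    rcases halmost i j k hij hik hjk with h | h | h
    · rw [hzero i j hij (by rw [hU]; exact h)]; ring
    · rw [hOsymm' k i, hzero i k hik (by rw [hU]; exact h)]; ring
    · rw [hzero j k hjk (by rw [hU]; exact h)]; ring
  -- U is positive semidefinite
  have hUpos : U.PosSemidef := by
    have hfac : U = (Matrix.of fun (r : Fin n) j => x j r)ᴴ *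
        (Matrix.of fun (r : Fin n) j => x j r) := by
      ext i j
      rw [hU, Matrix.mul_apply]
      simp [Matrix.conjTranspose_apply, PiLp.inner_apply, RCLike.inner_apply, conj_trivial]
      exact Finset.sum_congr rfl fun _ _ => mul_comm _ _
    rw [hfac]; exact Matrix.posSemidef_conjTranspose_mul_self _
  -- Gram factorization of 1 + O
  have hPB : ∃ B : Matrix (Fin (n+1)) (Fin (2*(n+1))) ℝ, (1 : Matrix _ _ ℝ) + O = Bᵀ * B := by
    set t : ℝ := Real.sqrt c⁻¹ with ht
    have ht2 : t * t = c⁻¹ := Real.mul_self_sqrt (by positivity)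
    have hs2 : Real.sqrt (1/(n:ℝ)) * Real.sqrt (1/(n:ℝ)) = 1/(n:ℝ) :=
      Real.mul_self_sqrt (by positivity)
    set B : Matrix (Fin (n+1)) (Fin (2*(n+1))) ℝ :=
      Matrix.of (fun r j => if h : (r : ℕ) < n then t * x j ⟨(r:ℕ), h⟩
        else t * Real.sqrt (1/(n:ℝ))) with hBdef
    have hBc : ∀ (r : Fin n) (j : Fin (2*(n+1))), B (Fin.castSucc r) j = t * x j r := by
      intro r j
      have hlt : ((Fin.castSucc r : Fin (n+1)) : ℕ) < n := by simpa using r.isLt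
      rw [hBdef]
      simp only [Matrix.of_apply]
      rw [dif_pos hlt]
      congr 1
    have hBl : ∀ j, B (Fin.last n) j = t * Real.sqrt (1/(n:ℝ)) := by
      intro j
      rw [hBdef]
      simp only [Matrix.of_apply]
      rw [dif_neg (by simp)]
    have hBB : ∀ i j, (Bᵀ * B) i j = c⁻¹ * (U i j + 1/n) := by
      intro i j
      have hinner : ⟪x i, x j⟫ = ∑ r : Fin n, x i r * x j r := by
        simp [PiLp.inner_apply, RCLike.inner_apply, conj_trivial]
        exact Finset.sum_congr rfl fun _ _ => mul_comm _ _
      rw [Matrix.mul_apply]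
      simp only [Matrix.transpose_apply]
      rw [Fin.sum_univ_castSucc]
      have h1 : ∀ r : Fin n, B (Fin.castSucc r) i * B (Fin.castSucc r) j
          = c⁻¹ * (x i r * x j r) := by
        intro r
        rw [hBc, hBc]
        calc t * x i r * (t * x j r) = (t*t) * (x i r * x j r) := by ring
          _ = c⁻¹ * (x i r * x j r) := by rw [ht2]
      rw [Finset.sum_congr rfl (fun r _ => h1 r), hBl, hBl, ← Finset.mul_sum]
      have h2 : t * Real.sqrt (1/(n:ℝ)) * (t * Real.sqrt (1/(n:ℝ))) = c⁻¹ * (1/n) := by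
        calc t * Real.sqrt (1/(n:ℝ)) * (t * Real.sqrt (1/(n:ℝ)))
            = (t*t) * (Real.sqrt (1/(n:ℝ)) * Real.sqrt (1/(n:ℝ))) := by ring
          _ = c⁻¹ * (1/n) := by rw [ht2, hs2]
      rw [h2, hU, hinner]
      ring
    refine ⟨B, ?_⟩
    ext i j
    rw [Matrix.add_apply, Matrix.one_apply, hOent i j, hBB i j]
    rcases eq_or_ne i j with rfl | hij
    · rw [if_pos rfl, if_pos rfl]
      linear_combination -hinv
    · rw [if_neg hij, if_neg hij]
      ring
  obtain ⟨B, hPB⟩ := hPB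
  have hPpos : ((1 : Matrix _ _ ℝ) + O).PosSemidef := by
    rw [hPB, ← Matrix.conjTranspose_eq_transpose_of_trivial]
    exact Matrix.posSemidef_conjTranspose_mul_self B
  have hP : ((1 : Matrix _ _ ℝ) + O).IsHermitian := hPpos.1
  have hrank : ((1 : Matrix _ _ ℝ) + O).rank ≤ n + 1 := by
    rw [hPB]
    calc (Bᵀ * B).rank ≤ B.rank := Matrix.rank_mul_le_right _ _
      _ ≤ Fintype.card (Fin (n+1)) := Matrix.rank_le_card_height B
      _ = n + 1 := Fintype.card_fin _
  -- Bessel bound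
  have hbess : ∀ i, ∑ j, (O i j)^2 ≤ 1 := by
    intro i
    set w : Fin (2*(n+1)) → ℝ := fun j => (if j = i then 1 else 0) - O i j with hw
    have h0 : 0 ≤ w ⬝ᵥ (((1 : Matrix _ _ ℝ) + O) *ᵥ w) := by
      have := hPpos.dotProduct_mulVec_nonneg w
      rwa [star_trivial] at this
    set d : ℝ := ∑ j, (O i j)^2 with hd
    have hval : w ⬝ᵥ (((1 : Matrix _ _ ℝ) + O) *ᵥ w) = 1 - d := by
      rw [Matrix.add_mulVec, Matrix.one_mulVec, dotProduct_add]
      have hww : w ⬝ᵥ w = 1 + d := by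
        rw [dotProduct, hd]
        have : ∀ j : Fin (2*(n+1)), w j * w j
            = (if j = i then (1:ℝ) else 0) - 2 * ((if j = i then (1:ℝ) else 0) * O i j) + (O i j)^2 := by
          intro j
          rw [hw]
          rcases eq_or_ne j i with rfl | hji
          · simp; ring
          · simp [hji]; ring
        rw [Finset.sum_congr rfl (fun j _ => this j)]
        rw [Finset.sum_add_distrib, Finset.sum_sub_distrib]
        rw [Finset.sum_ite_eq' Finset.univ i (fun _ => (1:ℝ))]
        have : ∑ j, 2 * ((if j = i then (1:ℝ) else 0) * O i j) = 2 * O i i := by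
          simp [ite_mul, mul_ite, Finset.sum_ite_eq']
        rw [this, hOdiag i]
        simp
      have hOw : ∀ j, (O *ᵥ w) j = O j i - ∑ k, O j k * O i k := by
        intro j
        rw [Matrix.mulVec, dotProduct]
        have : ∀ k : Fin (2*(n+1)), O j k * w k = (if k = i then O j k else 0) - O j k * O i k := by
          intro k
          rw [hw]
          rcases eq_or_ne k i with rfl | hki
          · simp; ring
          · simp [hki]
        rw [Finset.sum_congr rfl (fun k _ => this k), Finset.sum_sub_distrib,
          Finset.sum_ite_eq' Finset.univ i (fun k => O j k)]
        simp
      have hwOw : w ⬝ᵥ (O *ᵥ w) = -(2*d) := by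
        rw [dotProduct]
        have : ∀ j : Fin (2*(n+1)), w j * (O *ᵥ w) j
            = (if j = i then (O j i - ∑ k, O j k * O i k) else 0)
              - (O i j * O j i - ∑ k, O i j * (O j k * O i k)) := by
          intro j
          rw [hOw]
          have hb : w j = (if j = i then 1 else 0) - O i j := rfl
          rw [hb]
          rcases eq_or_ne j i with rfl | hji
          · simp [hOdiag]
          · simp only [if_neg hji]
            rw [← Finset.mul_sum]
            ring
        rw [Finset.sum_congr rfl (fun j _ => this j), Finset.sum_sub_distrib,
          Finset.sum_ite_eq' Finset.univ i (fun j => O j i - ∑ k, O j k * O i k)]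
        have htrisum : ∀ j, ∑ k, O i j * (O j k * O i k) = 0 := by
          intro j
          refine Finset.sum_eq_zero fun k _ => ?_
          have := htri i j k
          rw [hOsymm' k i] at this
          linear_combination this
        have h1 : ∑ j, (O i j * O j i - ∑ k, O i j * (O j k * O i k)) = d := by
          rw [Finset.sum_sub_distrib]
          have : ∑ j, O i j * O j i = d := by
            rw [hd]
            refine Finset.sum_congr rfl fun j _ => ?_
            rw [hOsymm' j i]; ring
          rw [this, Finset.sum_congr rfl (fun j _ => htrisum j)]
          simp
        rw [h1]
        have : (if i ∈ Finset.univ then O i i - ∑ k, O i k * O i k else 0) = -d := by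
          rw [if_pos (Finset.mem_univ i), hOdiag i, hd]
          simp [pow_two]
        rw [this]
        ring
      rw [hww, hwOw]
      ring
    rw [hval] at h0
    linarith
  -- trace facts
  have hOtr : O.trace = 0 := by
    rw [Matrix.trace]; exact Finset.sum_eq_zero fun i _ => hOdiag i
  have hsum : ∑ i, hP.eigenvalues i = 2*((n:ℝ)+1) := by
    rw [← aux_trace hP, Matrix.trace_add, Matrix.trace_one, hOtr, Fintype.card_fin]
    push_cast; ring
  have hsumsq : ∑ i, hP.eigenvalues i ^ 2 ≤ 2 * (2*((n:ℝ)+1)) := by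
    rw [← aux_trace_sq hP]
    have hexp : ((1 : Matrix _ _ ℝ) + O) * (1 + O) = 1 + O + O + O * O := by noncomm_ring
    rw [hexp, Matrix.trace_add, Matrix.trace_add, Matrix.trace_add, Matrix.trace_one, hOtr,
      Fintype.card_fin]
    have htrOO : (O * O).trace ≤ 2*((n:ℝ)+1) := by
      have h1 : (O * O).trace = ∑ i, ∑ j, (O i j)^2 := by
        rw [Matrix.trace]
        refine Finset.sum_congr rfl fun i _ => ?_
        rw [Matrix.diag_apply, Matrix.mul_apply]
        refine Finset.sum_congr rfl fun j _ => ?_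
        rw [hOsymm' j i]; ring
      rw [h1]
      calc ∑ i, ∑ j, (O i j)^2 ≤ ∑ _i : Fin (2*(n+1)), (1:ℝ) :=
            Finset.sum_le_sum fun i _ => hbess i
        _ = ((2*(n+1) : ℕ) : ℝ) := by
            rw [Finset.sum_const, Finset.card_univ, Fintype.card_fin, nsmul_eq_mul, mul_one]
        _ = 2*((n:ℝ)+1) := by push_cast; ring
    push_cast
    linarith
  have hnonneg : ∀ i, 0 ≤ hP.eigenvalues i := hPpos.eigenvalues_nonneg
  -- eigenvalues are 0 or 2
  have key : ∀ i, hP.eigenvalues i ^ 2 = 2 * hP.eigenvalues i := by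
    set lam := hP.eigenvalues with hlam
    set S : Finset (Fin (2*(n+1))) := Finset.univ.filter (fun i => lam i ≠ 0) with hS
    have hScard : (S.card : ℝ) ≤ (n:ℝ) + 1 := by
      have h1 := hP.rank_eq_card_non_zero_eigs
      have h2 : Fintype.card {i // lam i ≠ 0} = S.card := Fintype.card_subtype _
      have h3 := hrank
      rw [h1, h2] at h3
      exact_mod_cast h3
    have hsum' : ∑ i ∈ S, lam i = 2*((n:ℝ)+1) := by
      rw [hS, Finset.sum_filter_of_ne (fun i _ h => h), hsum]
    have hsumsq' : ∑ i ∈ S, lam i ^ 2 ≤ 2 * (2*((n:ℝ)+1)) := by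
      have hne : ∀ i ∈ Finset.univ, lam i ^ 2 ≠ 0 → lam i ≠ 0 :=
        fun i _ h hx => h (by rw [hx]; ring)
      rw [hS, Finset.sum_filter_of_ne hne]
      exact hsumsq
    have hexpand : ∑ i ∈ S, (lam i - 2)^2
        = (∑ i ∈ S, lam i ^ 2) - 4 * (∑ i ∈ S, lam i) + 4 * S.card := by
      have : ∀ i ∈ S, (lam i - 2)^2 = lam i ^ 2 - 4 * lam i + 4 := fun i _ => by ring
      rw [Finset.sum_congr rfl this, Finset.sum_add_distrib, Finset.sum_sub_distrib,
        ← Finset.mul_sum, Finset.sum_const, nsmul_eq_mul]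
      ring
    have hzeroS : ∑ i ∈ S, (lam i - 2)^2 ≤ 0 := by
      rw [hexpand, hsum']
      linarith [hsumsq', hScard]
    have hall : ∀ i ∈ S, (lam i - 2)^2 = 0 := by
      have hnn : ∀ j ∈ S, (0:ℝ) ≤ (lam j - 2)^2 := fun j _ => sq_nonneg _
      have hz : ∑ i ∈ S, (lam i - 2)^2 = 0 :=
        le_antisymm hzeroS (Finset.sum_nonneg hnn)
      exact (Finset.sum_eq_zero_iff_of_nonneg hnn).mp hz
    intro i
    by_cases hi : lam i = 0
    · rw [hi]; ring
    · have hiS : i ∈ S := by rw [hS]; simp [hi]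
      have h4 := hall i hiS
      have h5 : lam i = 2 := by nlinarith [h4]
      rw [h5]; ring
  have hPP := aux_two_smul hP key
  have hOO : O * O = 1 := by
    have hPP' := hPP
    have hexp : ((1 : Matrix _ _ ℝ) + O) * (1 + O) = 1 + O + O + O * O := by noncomm_ring
    rw [hexp, two_smul] at hPP'
    calc O * O = (1 + O + O + O * O) - (1 + O + O) := by abel
      _ = ((1 + O) + (1 + O)) - (1 + O + O) := by rw [hPP']
      _ = 1 := by abel
  -- row sums
  have hOe : O.mulVec (fun _ => 1) = (fun _ => 1) := by
    set e : Fin (2*(n+1)) → ℝ := fun _ => 1 with he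
    have hPsymm : ((1 : Matrix _ _ ℝ) + O)ᵀ = (1 : Matrix _ _ ℝ) + O := by
      rw [← Matrix.conjTranspose_eq_transpose_of_trivial]; exact hP
    set tP : ℝ := e ⬝ᵥ (((1 : Matrix _ _ ℝ) + O) *ᵥ e) with htP
    have hUe : 0 ≤ e ⬝ᵥ (U *ᵥ e) := by
      have := hUpos.dotProduct_mulVec_nonneg e; rwa [star_trivial] at this
    have hPexp : c • ((1 : Matrix _ _ ℝ) + O) = U + (1/(n:ℝ)) • J := by
      rw [hO, smul_add, smul_smul, mul_inv_cancel₀ hcne, one_smul]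
      rw [show c • (1 : Matrix (Fin (2*(n+1))) (Fin (2*(n+1))) ℝ) + (U + (1/(n:ℝ)) • J - c • 1)
        = U + (1/(n:ℝ)) • J from by abel]
    have hJe : e ⬝ᵥ (J *ᵥ e) = (2*((n:ℝ)+1))^2 := by
      simp [Matrix.mulVec, dotProduct, hJ, he, Fintype.card_fin]
      push_cast; ring
    have hct : c * tP = e ⬝ᵥ (U *ᵥ e) + (1/(n:ℝ)) * ((2*((n:ℝ)+1))^2) := by
      have h2 : e ⬝ᵥ ((c • ((1 : Matrix _ _ ℝ) + O)) *ᵥ e) = c * tP := by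
        rw [Matrix.smul_mulVec, dotProduct_smul, htP, smul_eq_mul]
      rw [← h2, hPexp, Matrix.add_mulVec, Matrix.smul_mulVec, dotProduct_add,
        dotProduct_smul, hJe, smul_eq_mul]
    have htlow : 2*(2*((n:ℝ)+1)) ≤ tP := by
      have hne0 : (n:ℝ) ≠ 0 := ne_of_gt hnpos
      have hkey : (1/(n:ℝ))*(2*((n:ℝ)+1))^2 ≤ c * tP := by rw [hct]; linarith
      have hn1 : (n:ℝ) * (1/(n:ℝ)) = 1 := by field_simp
      have hcn : (n:ℝ) * c = (n:ℝ)+1 := by rw [hc]; field_simp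
      have h9 : 4*((n:ℝ)+1)^2 ≤ ((n:ℝ)+1) * tP := by
        calc 4*((n:ℝ)+1)^2 = ((n:ℝ) * (1/(n:ℝ))) * (2*((n:ℝ)+1))^2 := by rw [hn1]; ring
          _ = (n:ℝ) * ((1/(n:ℝ))*(2*((n:ℝ)+1))^2) := by ring
          _ ≤ (n:ℝ) * (c * tP) := by
              exact mul_le_mul_of_nonneg_left hkey (le_of_lt hnpos)
          _ = ((n:ℝ) * c) * tP := by ring
          _ = ((n:ℝ)+1) * tP := by rw [hcn]
      nlinarith [h9, hnpos]
    have hPe2 : ((1 : Matrix _ _ ℝ) + O) *ᵥ e = (2:ℝ) • e := by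
      set u : Fin (2*(n+1)) → ℝ := ((1 : Matrix _ _ ℝ) + O) *ᵥ e - (2:ℝ) • e with hu
      have hvm : ∀ z, z ᵥ* ((1 : Matrix _ _ ℝ) + O) = ((1 : Matrix _ _ ℝ) + O) *ᵥ z := by
        intro z
        conv_lhs => rw [← hPsymm]
        rw [Matrix.vecMul_transpose]
      have hPPe : (((1 : Matrix _ _ ℝ) + O) *ᵥ e) ⬝ᵥ (((1 : Matrix _ _ ℝ) + O) *ᵥ e) = 2 * tP := by
        rw [dotProduct_mulVec, hvm, Matrix.mulVec_mulVec, hPP,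
          Matrix.smul_mulVec, smul_dotProduct, dotProduct_comm, ← htP]
        simp
      have hee : e ⬝ᵥ e = 2*((n:ℝ)+1) := by
        have : e ⬝ᵥ e = ((2*(n+1) : ℕ) : ℝ) := by
          simp [he, dotProduct]
        rw [this]; push_cast; ring
      have hPee : (((1 : Matrix _ _ ℝ) + O) *ᵥ e) ⬝ᵥ e = tP := by
        rw [dotProduct_comm, htP]
      have huu : u ⬝ᵥ u = 4*(2*((n:ℝ)+1)) - 2 * tP := by
        rw [hu, sub_dotProduct, dotProduct_sub, dotProduct_sub,
          smul_dotProduct, smul_dotProduct, dotProduct_smul,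
          dotProduct_smul, hPPe, hee, hPee]
        have : e ⬝ᵥ (((1 : Matrix _ _ ℝ) + O) *ᵥ e) = tP := htP.symm
        rw [this]
        simp [smul_eq_mul]
        ring
      have hle0 : u ⬝ᵥ u ≤ 0 := by rw [huu]; linarith
      have hge0 : 0 ≤ u ⬝ᵥ u := Finset.sum_nonneg fun i _ => mul_self_nonneg _
      have hu0 : u = 0 := dotProduct_self_eq_zero.mp (le_antisymm hle0 hge0)
      rw [hu] at hu0
      exact sub_eq_zero.mp hu0
    have hOeval : O *ᵥ e = ((1 : Matrix _ _ ℝ) + O) *ᵥ e - e := by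
      rw [Matrix.add_mulVec, Matrix.one_mulVec]; abel
    rw [show O.mulVec (fun _ => 1) = O *ᵥ e from rfl, hOeval, hPe2]
    funext i
    simp [he]
    norm_num
  exact ⟨hOsym, hOO, hOe, hOdiag, htri⟩
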